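/- Let H_A and H_C be Hilbert spaces, A a bounded self-adjoint operator on H_A, C a bounded self-adjoint operator on H_C, and B a bounded operator from H_C to H_A. Let H be the bounded self-adjoint block operator on H_A ⊕ H_C given by H(x ⊕ y) = (A x + B y) ⊕ (B* x + C y). Then a bounded operator X : H_A → H_C satisfies the Riccati equation X A - C X + X B X = B* if and only if the graph subspace G(X) = { x ⊕ X x : x ∈ H_A } is invariant under H and its orthogonal complement is also invariant under H (i.e., G(X) reduces H). -/

import Mathlib

/-- A bounded operator `X : H_A → H_C` satisfies the Riccati equation
`X A - C X + X B X = B*` iff the graph subspace `G(X)` and its orthogonal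
complement are both invariant under the block operator matrix `H = [[A,B],[B*,C]]`. -/
theorem riccati_iff_graph_reduces
    {HA HC : Type*} [NormedAddCommGroup HA] [InnerProductSpace ℂ HA] [CompleteSpace HA]
    [NormedAddCommGroup HC] [InnerProductSpace ℂ HC] [CompleteSpace HC]
    (A : HA →L[ℂ] HA) (hA : IsSelfAdjoint A)
    (C : HC →L[ℂ] HC) (hC : IsSelfAdjoint C)
    (B : HC →L[ℂ] HA)
    (H : WithLp 2 (HA × HC) →L[ℂ] WithLp 2 (HA × HC))
    (hH : ∀ (x : HA) (y : HC),
      H ((WithLp.equiv 2 (HA × HC)).symm (x, y)) =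
        (WithLp.equiv 2 (HA × HC)).symm (A x + B y, ContinuousLinearMap.adjoint B x + C y))
    (X : HA →L[ℂ] HC)
    (G : Submodule ℂ (WithLp 2 (HA × HC)))
    (hG : ∀ z, z ∈ G ↔ ∃ x : HA, z = (WithLp.equiv 2 (HA × HC)).symm (x, X x)) :
    (X ∘L A - C ∘L X + X ∘L B ∘L X = ContinuousLinearMap.adjoint B) ↔
      ((∀ z ∈ G, H z ∈ G) ∧ (∀ z ∈ Gᗮ, H z ∈ Gᗮ)) := by
  -- H is symmetric
  have hsym : ∀ z w : WithLp 2 (HA × HC), inner (𝕜 := ℂ) (H z) w = inner (𝕜 := ℂ) z (H w) := by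
    intro z w
    have hz : z = (WithLp.equiv 2 (HA × HC)).symm (z.ofLp.1, z.ofLp.2) := rfl
    have hw : w = (WithLp.equiv 2 (HA × HC)).symm (w.ofLp.1, w.ofLp.2) := rfl
    rw [hz, hw, hH, hH]
    simp only [WithLp.prod_inner_apply, WithLp.equiv_symm_apply, WithLp.ofLp_toLp,
      ContinuousLinearMap.add_apply, inner_add_left, inner_add_right,
      ContinuousLinearMap.adjoint_inner_left, ContinuousLinearMap.adjoint_inner_right,
      hA.adjoint_eq ▸ (ContinuousLinearMap.adjoint_inner_left A),
      hC.adjoint_eq ▸ (ContinuousLinearMap.adjoint_inner_left C)]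
    have hAs : ∀ (a b : HA), inner (𝕜 := ℂ) (A a) b = inner (𝕜 := ℂ) a (A b) := by
      intro a b
      conv_rhs => rw [← hA.adjoint_eq]
      rw [ContinuousLinearMap.adjoint_inner_right]
    have hCs : ∀ (a b : HC), inner (𝕜 := ℂ) (C a) b = inner (𝕜 := ℂ) a (C b) := by
      intro a b
      conv_rhs => rw [← hC.adjoint_eq]
      rw [ContinuousLinearMap.adjoint_inner_right]
    
    ring
  constructor
  · intro hric
    have hGinv : ∀ z ∈ G, H z ∈ G := by
      intro z hz
      obtain ⟨x, rfl⟩ := (hG z).mp hz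
      rw [hH]
      refine (hG _).mpr ⟨A x + B (X x), ?_⟩
      congr 1
      have : X (A x + B (X x)) = (ContinuousLinearMap.adjoint B) x + C (X x) := by
        have := congrArg (fun T => T x) hric
        simp only [ContinuousLinearMap.sub_apply, ContinuousLinearMap.add_apply,
          ContinuousLinearMap.comp_apply] at this ⊢
        rw [map_add, ← this]
        abel
      rw [this]
    refine ⟨hGinv, ?_⟩
    intro z hz
    rw [Submodule.mem_orthogonal] at hz ⊢
    intro w hw
    rw [← hsym]
    exact hz _ (hGinv _ hw)
  · rintro ⟨h1, -⟩
    ext x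
    have hx : (WithLp.equiv 2 (HA × HC)).symm (x, X x) ∈ G := (hG _).mpr ⟨x, rfl⟩
    have := h1 _ hx
    rw [hH] at this
    obtain ⟨x', hx'⟩ := (hG _).mp this
    have h' := congrArg (WithLp.equiv 2 (HA × HC)) hx'
    simp only [Equiv.apply_symm_apply] at h'
    have h1' : A x + B (X x) = x' := congrArg Prod.fst h'
    have h2' : (ContinuousLinearMap.adjoint B) x + C (X x) = X x' := congrArg Prod.snd h'
    simp only [ContinuousLinearMap.sub_apply, ContinuousLinearMap.add_apply,
      ContinuousLinearMap.comp_apply]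
    rw [← h1', map_add] at h2'
    have : X (A x) + X (B (X x)) = (ContinuousLinearMap.adjoint B) x + C (X x) := h2'.symm
    linear_combination (norm := abel) this
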